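/- Let (X, ε) be a 2-colored graph with an odd involution τ. Then there is an isomorphism of 2-colored graphs φ : X → K_2 × (X/τ) (where K_2 × (X/τ) is 2-colored by the first projection) satisfying φ ∘ τ = τ_can ∘ φ, where τ_can is the canonical odd involution of K_2 × (X/τ). -/

import Mathlib

/-- A graph: a vertex type with a symmetric edge relation (loops allowed). -/
structure SymGraph where
  V : Type
  E : V → V → Prop
  symm : ∀ ⦃x y⦄, E x y → E y x

/-- Graph homomorphisms. -/
def SymGraph.Hom (G H : SymGraph) : Type :=
  {f : G.V → H.V // ∀ ⦃x y⦄, G.E x y → H.E (f x) (f y)}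

/-- Graph isomorphisms: bijective homomorphisms whose inverse is a homomorphism. -/
structure SymGraph.Iso (G H : SymGraph) extends G.V ≃ H.V where
  edge_iff : ∀ x y, G.E x y ↔ H.E (toEquiv x) (toEquiv y)

/-- The complete graph `K₂` on two vertices. -/
def K2 : SymGraph := ⟨Fin 2, fun x y => x ≠ y, fun _ _ h => h.symm⟩

/-- The tensor (categorical) product of graphs. -/
def SymGraph.tensor (G H : SymGraph) : SymGraph :=
  ⟨G.V × H.V, fun p q => G.E p.1 q.1 ∧ H.E p.2 q.2,
   fun _ _ h => ⟨G.symm h.1, H.symm h.2⟩⟩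

/-- No isolated vertices. -/
def SymGraph.NoIsolated (G : SymGraph) : Prop := ∀ x, ∃ y, G.E x y

/-- The box complex `B(G)`: pairs of nonempty subsets `(σ, τ)` with `σ × τ ⊆ E(G)`. -/
def SymGraph.Box (G : SymGraph) : Type :=
  {p : Set G.V × Set G.V //
    p.1.Nonempty ∧ p.2.Nonempty ∧ ∀ x ∈ p.1, ∀ y ∈ p.2, G.E x y}

instance (G : SymGraph) : PartialOrder G.Box where
  le a b := a.1.1 ⊆ b.1.1 ∧ a.1.2 ⊆ b.1.2
  le_refl a := ⟨subset_rfl, subset_rfl⟩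
  le_trans a b c h1 h2 := ⟨h1.1.trans h2.1, h1.2.trans h2.2⟩
  le_antisymm a b h1 h2 :=
    Subtype.ext (Prod.ext (h1.1.antisymm h2.1) (h1.2.antisymm h2.2))

/-- The canonical involution `(σ,τ) ↦ (τ,σ)` of the box complex. -/
def SymGraph.Box.flip {G : SymGraph} (p : G.Box) : G.Box :=
  ⟨(p.1.2, p.1.1), p.2.2.1, p.2.1, fun x hx y hy => G.symm (p.2.2.2 y hy x hx)⟩

/-- A 2-coloring of a graph: a graph homomorphism to `K₂`. -/
def SymGraph.TwoColoring (X : SymGraph) (ε : X.V → Fin 2) : Prop :=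
  ∀ ⦃x y⦄, X.E x y → ε x ≠ ε y

/-- The quotient of a graph by an involution `τ`: vertices are the orbits `{x, τ x}`,
and two orbits are adjacent iff some representatives are adjacent. -/
def SymGraph.quot (X : SymGraph) (τ : X.V → X.V) : SymGraph where
  V := {S : Set X.V // ∃ x, S = {x, τ x}}
  E α β := ∃ a ∈ α.1, ∃ b ∈ β.1, X.E a b
  symm := fun _ _ ⟨a, ha, b, hb, h⟩ => ⟨b, hb, a, ha, X.symm h⟩

/-- if `(X, ε)` is a 2-colored graph with an odd involution `τ`, then there
is an isomorphism of 2-colored graphs `φ : X → K₂ × (X/τ)` (the target 2-colored by the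
first projection) intertwining `τ` with the canonical odd involution of `K₂ × (X/τ)`. -/
theorem two_colored_graph_with_odd_involution_is_kronecker
    (X : SymGraph) (ε : X.V → Fin 2) (hε : X.TwoColoring ε)
    (τ : X.V → X.V) (hom : ∀ ⦃x y⦄, X.E x y → X.E (τ x) (τ y))
    (invol : ∀ x, τ (τ x) = x) (odd : ∀ x, ε (τ x) ≠ ε x) :
    ∃ φ : X.Iso (K2.tensor (X.quot τ)),
      (∀ x, (φ.toEquiv x).1 = ε x) ∧
      (∀ x, φ.toEquiv (τ x) = (fun q : Fin 2 × (X.quot τ).V => (q.1 + 1, q.2)) (φ.toEquiv x)) := by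
  classical
  have fin2 : ∀ a b c : Fin 2, a ≠ b → c ≠ b → a = c := by decide
  have fin2' : ∀ a b : Fin 2, a ≠ b → a = b + 1 := by decide
  let f : X.V → (K2.tensor (X.quot τ)).V := fun x => (ε x, ⟨{x, τ x}, x, rfl⟩)
  have hinj : Function.Injective f := by
    intro x y h
    have h1 : ε x = ε y := congrArg Prod.fst h
    have h2 : ({x, τ x} : Set X.V) = {y, τ y} := congrArg (fun p => (Prod.snd p).1) h
    have hx : x ∈ ({y, τ y} : Set X.V) := h2 ▸ (Set.mem_insert x _)
    rcases hx with hx | hx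
    · exact hx
    · simp only [Set.mem_singleton_iff] at hx
      subst hx
      exact absurd h1 (odd y)
  have hsurj : Function.Surjective f := by
    rintro ⟨i, ⟨S, x, rfl⟩⟩
    by_cases h : ε x = i
    · exact ⟨x, by subst h; rfl⟩
    · refine ⟨τ x, ?_⟩
      show ((ε (τ x), ⟨{τ x, τ (τ x)}, τ x, rfl⟩) : (K2.tensor (X.quot τ)).V)
          = (i, ⟨{x, τ x}, x, rfl⟩)
      have h1 : ε (τ x) = i := fin2 _ _ _ (odd x) (Ne.symm h)
      have h2 : ({τ x, τ (τ x)} : Set X.V) = {x, τ x} := by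
        rw [invol]; exact Set.pair_comm _ _
      exact Prod.ext h1 (Subtype.ext h2)
  have key : ∀ x y, X.E x y ↔ (K2.tensor (X.quot τ)).E (f x) (f y) := by
    intro x y
    constructor
    · intro h
      exact ⟨hε h, x, Set.mem_insert _ _, y, Set.mem_insert _ _, h⟩
    · rintro ⟨hne, a, ha, b, hb, hab⟩
      have col : ε x ≠ ε y := hne
      have ha' : a = x ∨ a = τ x := by simpa [f] using ha
      have hb' : b = y ∨ b = τ y := by simpa [f] using hb
      rcases ha' with h | h <;> rcases hb' with h' | h' <;> rw [h, h'] at hab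
      · exact hab
      · exact absurd (fin2 (ε x) (ε (τ y)) (ε y) (hε hab) (Ne.symm (odd y))) col
      · exact absurd (fin2 (ε y) (ε (τ x)) (ε x) (hε (X.symm hab)) (Ne.symm (odd x))).symm col
      · have h2 := hom hab
        rwa [invol, invol] at h2
  refine ⟨⟨Equiv.ofBijective f ⟨hinj, hsurj⟩, key⟩, fun x => rfl, fun x => ?_⟩
  refine Prod.ext (fin2' (ε (τ x)) (ε x) (odd x)) (Subtype.ext ?_)
  show ({τ x, τ (τ x)} : Set X.V) = {x, τ x}
  rw [invol]
  exact Set.pair_comm _ _
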